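/- Let X be a compact Hausdorff space, U ⊆ X clopen, σ : U → X continuous with σ(U) open. Define X̃ ⊆ ∏_{i=0}^∞ (X ⊔ {0}) as the union of X_N = {(x_0,...,x_N,0,0,...) : σ(x_i) = x_{i-1} for 1 ≤ i ≤ N, x_N ∉ σ(U)} over N ≥ 0 together with X_∞ = {(x_0,x_1,...) : σ(x_i) = x_{i-1} for all i ≥ 1}, with the subspace topology from the product topology on ∏ (X ⊔ {0}) where {0} is an added isolated point. Then X̃ is compact. -/

import Mathlib

/-- The `σ`-extension `X̃` of a partial dynamical system `σ : U → X`: sequences in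
`(X ⊔ {0})^ℕ` (here `0` is the extra point `Sum.inr ()`) which either consist of a
finite chain `(x₀,...,x_N, 0, 0, ...)` with `x_i ∈ U`, `σ(x_i) = x_{i-1}` for
`1 ≤ i ≤ N` and `x_N ∉ σ(U)`, or of an infinite chain `(x₀, x₁, ...)` with
`σ(x_i) = x_{i-1}` for all `i ≥ 1`. -/
def SigmaExt {X : Type*} (U : Set X) (σ : U → X) : Set (ℕ → X ⊕ Unit) :=
  {y | (∃ N : ℕ,
          (∀ i : ℕ, 1 ≤ i → i ≤ N →
            ∃ u : U, y i = Sum.inl (u : X) ∧ y (i - 1) = Sum.inl (σ u)) ∧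
          (∃ xN : X, y N = Sum.inl xN ∧ xN ∉ Set.range σ) ∧
          (∀ i : ℕ, N < i → y i = Sum.inr ()))
      ∨ (∀ i : ℕ, 1 ≤ i →
          ∃ u : U, y i = Sum.inl (u : X) ∧ y (i - 1) = Sum.inl (σ u))}

/-- for `X` compact Hausdorff, `U ⊆ X` clopen and `σ : U → X`
continuous with `σ(U)` open, the `σ`-extension `X̃` is compact (in the product
topology of `(X ⊔ {0})^ℕ`). -/
theorem sigmaExt_isCompact {X : Type*} [TopologicalSpace X] [CompactSpace X]
    [T2Space X] (U : Set X) (hU : IsClopen U) (σ : U → X) (hσ : Continuous σ)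
    (hopen : IsOpen (Set.range σ)) :
    IsCompact (SigmaExt U σ) := by
  classical
  open Set in
  set P : (X ⊕ Unit) → (X ⊕ Unit) → Prop := fun p q =>
    (∃ u : U, q = Sum.inl (u : X) ∧ p = Sum.inl (σ u)) ∨
    (q = Sum.inr () ∧ ∃ x : X, p = Sum.inl x ∧ x ∉ Set.range σ) ∨
    (q = Sum.inr () ∧ p = Sum.inr ()) with hPdef
  have hset : SigmaExt U σ =
      {y : ℕ → X ⊕ Unit | ∃ x : X, y 0 = Sum.inl x} ∩
        ⋂ i : ℕ, {y : ℕ → X ⊕ Unit | P (y i) (y (i + 1))} := by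
    ext y
    simp only [Set.mem_inter_iff, Set.mem_iInter, Set.mem_setOf_eq, SigmaExt, hPdef]
    constructor
    · rintro (⟨N, h1, ⟨xN, hxN, hnr⟩, h3⟩ | h)
      · refine ⟨?_, ?_⟩
        · rcases Nat.eq_zero_or_pos N with hN | hN
          · subst hN; exact ⟨xN, hxN⟩
          · obtain ⟨u, _, hu2⟩ := h1 1 le_rfl hN
            exact ⟨σ u, hu2⟩
        · intro i
          rcases lt_trichotomy i N with hi | hi | hi
          · obtain ⟨u, hu1, hu2⟩ := h1 (i + 1) (by omega) (by omega)
            left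
            exact ⟨u, hu1, by simpa using hu2⟩
          · subst hi
            right; left
            exact ⟨h3 _ (by omega), xN, hxN, hnr⟩
          · right; right
            exact ⟨h3 _ (by omega), h3 _ hi⟩
      · refine ⟨?_, ?_⟩
        · obtain ⟨u, _, hu2⟩ := h 1 le_rfl
          exact ⟨σ u, hu2⟩
        · intro i
          obtain ⟨u, hu1, hu2⟩ := h (i + 1) (by omega)
          left; exact ⟨u, hu1, by simpa using hu2⟩
    · rintro ⟨⟨x0, hx0⟩, hPall⟩
      by_cases h : ∀ i : ℕ, ∃ u : U, y (i + 1) = Sum.inl (u : X) ∧ y i = Sum.inl (σ u)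
      · right
        intro i hi
        obtain ⟨u, hu1, hu2⟩ := h (i - 1)
        rw [Nat.sub_add_cancel hi] at hu1
        exact ⟨u, hu1, hu2⟩
      · left
        rw [not_forall] at h
        set N := Nat.find h with hNdef
        have hNspec : ¬∃ u : U, y (N + 1) = Sum.inl (u : X) ∧ y N = Sum.inl (σ u) :=
          Nat.find_spec h
        have hNmin : ∀ m, m < N →
            ∃ u : U, y (m + 1) = Sum.inl (u : X) ∧ y m = Sum.inl (σ u) := by
          intro m hm
          exact not_not.mp (Nat.find_min h hm)
        have htail : ∀ i : ℕ, N < i → y i = Sum.inr () := by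
          intro i hi
          induction i with
          | zero => omega
          | succ n ih =>
            have hle : N = n ∨ N < n := eq_or_lt_of_le (Nat.lt_succ_iff.mp hi)
            rcases hPall n with hA | hB | hC
            · exfalso
              rcases hle with h1 | h1
              · exact (h1 ▸ hNspec) hA
              · obtain ⟨u, _, hu2⟩ := hA
                rw [ih h1] at hu2
                exact Sum.inr_ne_inl hu2
            · exact hB.1
            · exact hC.1
        refine ⟨N, ?_, ?_, htail⟩
        · intro i hi1 hiN
          obtain ⟨u, hu1, hu2⟩ := hNmin (i - 1) (by omega)
          rw [Nat.sub_add_cancel hi1] at hu1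
          exact ⟨u, hu1, hu2⟩
        · have hyN : ∃ x : X, y N = Sum.inl x := by
            rcases Nat.eq_zero_or_pos N with h0 | h0
            · rw [h0]; exact ⟨x0, hx0⟩
            · obtain ⟨u, hu1, _⟩ := hNmin (N - 1) (by omega)
              rw [Nat.sub_add_cancel h0] at hu1
              exact ⟨u, hu1⟩
          obtain ⟨x, hx⟩ := hyN
          rcases hPall N with hA | hB | hC
          · exact absurd hA hNspec
          · obtain ⟨_, x', hx', hx'nr⟩ := hB
            exact ⟨x', hx', hx'nr⟩
          · rw [hx] at hC
            exact (Sum.inl_ne_inr hC.2).elim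
  -- Topology
  haveI : CompactSpace U := isCompact_iff_compactSpace.mp (hU.isClosed.isCompact)
  haveI : CompactSpace ((Set.range σ)ᶜ : Set X) :=
    isCompact_iff_compactSpace.mp (hopen.isClosed_compl.isCompact)
  have cA : Continuous (fun u : U =>
      ((Sum.inl (σ u) : X ⊕ Unit), (Sum.inl (u : X) : X ⊕ Unit))) :=
    (continuous_inl.comp hσ).prodMk (continuous_inl.comp continuous_subtype_val)
  have cB : Continuous (fun x : ((Set.range σ)ᶜ : Set X) =>
      ((Sum.inl (x : X) : X ⊕ Unit), (Sum.inr () : X ⊕ Unit))) :=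
    (continuous_inl.comp continuous_subtype_val).prodMk continuous_const
  have heq : {p : (X ⊕ Unit) × (X ⊕ Unit) | P p.1 p.2} =
      Set.range (fun u : U =>
        ((Sum.inl (σ u) : X ⊕ Unit), (Sum.inl (u : X) : X ⊕ Unit))) ∪
      Set.range (fun x : ((Set.range σ)ᶜ : Set X) =>
        ((Sum.inl (x : X) : X ⊕ Unit), (Sum.inr () : X ⊕ Unit))) ∪
      {((Sum.inr () : X ⊕ Unit), (Sum.inr () : X ⊕ Unit))} := by
    ext pq
    constructor
    · intro hpq
      simp only [hPdef, Set.mem_setOf_eq] at hpq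
      rcases hpq with ⟨u, hq, hp⟩ | ⟨hq, x, hp, hx⟩ | ⟨hq, hp⟩
      · exact Or.inl (Or.inl ⟨u, Prod.ext hp.symm hq.symm⟩)
      · exact Or.inl (Or.inr ⟨⟨x, hx⟩, Prod.ext hp.symm hq.symm⟩)
      · exact Or.inr (Prod.ext hp hq)
    · rintro ((⟨u, rfl⟩ | ⟨x, rfl⟩) | rfl) <;>
        simp only [hPdef, Set.mem_setOf_eq]
      · exact Or.inl ⟨u, rfl, rfl⟩
      · exact Or.inr (Or.inl ⟨trivial, x, rfl, x.2⟩)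
      · exact Or.inr (Or.inr ⟨trivial, trivial⟩)
  have hT : IsClosed {p : (X ⊕ Unit) × (X ⊕ Unit) | P p.1 p.2} := by
    rw [heq]
    exact ((isCompact_range cA).isClosed.union
      (isCompact_range cB).isClosed).union isClosed_singleton
  have h1 : IsClosed {y : ℕ → X ⊕ Unit | ∃ x : X, y 0 = Sum.inl x} := by
    have : {y : ℕ → X ⊕ Unit | ∃ x : X, y 0 = Sum.inl x} =
        (fun y : ℕ → X ⊕ Unit => y 0) ⁻¹' Set.range (Sum.inl : X → X ⊕ Unit) := by
      ext y
      simp [eq_comm]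
    rw [this]
    exact isClosed_range_inl.preimage (continuous_apply 0)
  have hclosed : IsClosed (SigmaExt U σ) := by
    rw [hset]
    refine h1.inter (isClosed_iInter fun i => ?_)
    have : {y : ℕ → X ⊕ Unit | P (y i) (y (i + 1))} =
        (fun y : ℕ → X ⊕ Unit => (y i, y (i + 1))) ⁻¹'
          {p : (X ⊕ Unit) × (X ⊕ Unit) | P p.1 p.2} := rfl
    rw [this]
    exact hT.preimage ((continuous_apply i).prodMk (continuous_apply (i + 1)))
  exact hclosed.isCompact
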